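/- arXiv:2403.10121 — 2 statements merged into one kernel-verified Lean document; each statement's English description precedes it below -/
import Mathlib

section
/- Let φ₁ : V₁ → U₁ ∩ M and φ₂ : V₂ → U₂ ∩ M be two local C^k-parametrizations of an m-dimensional C^k-submanifold M of a Banach space W with X := U₁ ∩ U₂ ∩ M nonempty. Then the transition map φ := φ₁⁻¹ ∘ φ₂ : φ₂⁻¹(X) → φ₁⁻¹(X) is a C^k-diffeomorphism between open subsets of ℝ^m. -/
open Function Set

lemma exists_clm_left_inverse
    {E : Type*} [NormedAddCommGroup E] [NormedSpace ℝ E] [FiniteDimensional ℝ E]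
    {W : Type*} [NormedAddCommGroup W] [NormedSpace ℝ W]
    (T : E →L[ℝ] W) (hT : Function.Injective T) :
    ∃ π : W →L[ℝ] E, ∀ x, π (T x) = x := by
  set p : Submodule ℝ W := LinearMap.range (T : E →ₗ[ℝ] W) with hp
  let e : E ≃ₗ[ℝ] p := LinearEquiv.ofInjective (T : E →ₗ[ℝ] W) hT
  haveI : FiniteDimensional ℝ p := Module.Finite.equiv e
  obtain ⟨f, hf⟩ := Submodule.ClosedComplemented.of_finiteDimensional p
  refine ⟨(LinearMap.toContinuousLinearMap e.symm.toLinearMap).comp f, fun x => ?_⟩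
  have h1 : f (T x) = e x := by
    have := hf ⟨T x, LinearMap.mem_range_self _ x⟩
    exact this.trans (Subtype.ext (by rw [LinearEquiv.ofInjective_apply]; rfl))
  simp [h1, e]

/-- Smoothness of the transition map. -/
lemma transition_contDiffOn
    {E : Type*} [NormedAddCommGroup E] [NormedSpace ℝ E] [FiniteDimensional ℝ E]
    [CompleteSpace E]
    {W : Type*} [NormedAddCommGroup W] [NormedSpace ℝ W]
    {k : ℕ∞} (hk : 1 ≤ k) {M : Set W}
    {O₁ O₂ : Set E} {U₁ U₂ : Set W}
    {φ₁ φ₂ : E → W} {ψ₁ : W → E}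
    (hO₁ : IsOpen O₁) (hO₂ : IsOpen O₂)
    (hφ₁ : ContDiffOn ℝ k φ₁ O₁) (hφ₂ : ContDiffOn ℝ k φ₂ O₂)
    (himg₁ : φ₁ '' O₁ = U₁ ∩ M)
    (hinv₁ : ∀ z ∈ O₁, ψ₁ (φ₁ z) = z)
    (hψ₁ : ContinuousOn ψ₁ (U₁ ∩ M))
    (hder₁ : ∀ z ∈ O₁, Function.Injective (fderivWithin ℝ φ₁ O₁ z))
    (hD : IsOpen (O₂ ∩ φ₂ ⁻¹' (U₁ ∩ U₂ ∩ M))) :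
    ContDiffOn ℝ k (ψ₁ ∘ φ₂) (O₂ ∩ φ₂ ⁻¹' (U₁ ∩ U₂ ∩ M)) := by
  set D₂ := O₂ ∩ φ₂ ⁻¹' (U₁ ∩ U₂ ∩ M) with hD₂
  intro p hp
  suffices h : ContDiffAt ℝ k (ψ₁ ∘ φ₂) p from h.contDiffWithinAt
  -- φ₂ p lies in φ₁ '' O₁
  have hpU : φ₂ p ∈ U₁ ∩ M := ⟨hp.2.1.1, hp.2.2⟩
  obtain ⟨z₀, hz₀, hz₀eq⟩ : ∃ z₀ ∈ O₁, φ₁ z₀ = φ₂ p := by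
    have : φ₂ p ∈ φ₁ '' O₁ := himg₁ ▸ hpU
    exact this.imp (fun z hz => ⟨hz.1, hz.2⟩)
  have hψφ : ψ₁ (φ₂ p) = z₀ := by rw [← hz₀eq, hinv₁ z₀ hz₀]
  -- derivative of φ₁ at z₀
  have hφ₁at : ContDiffAt ℝ k φ₁ z₀ := hφ₁.contDiffAt (hO₁.mem_nhds hz₀)
  have hdiff : DifferentiableAt ℝ φ₁ z₀ :=
    hφ₁at.differentiableAt (by exact_mod_cast (show k ≠ 0 by rintro rfl; simp at hk))
  set T : E →L[ℝ] W := fderiv ℝ φ₁ z₀ with hT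
  have hTinj : Function.Injective T := by
    have : fderivWithin ℝ φ₁ O₁ z₀ = T := fderivWithin_of_isOpen hO₁ hz₀
    rw [← this]; exact hder₁ z₀ hz₀
  obtain ⟨π, hπ⟩ := exists_clm_left_inverse T hTinj
  -- g := π ∘ φ₁ has invertible derivative at z₀
  set g : E → E := π ∘ φ₁ with hg
  have hgc : ContDiffAt ℝ k g z₀ := π.contDiff.contDiffAt.comp z₀ hφ₁at
  have hgd : HasFDerivAt g ((ContinuousLinearEquiv.refl ℝ E : E ≃L[ℝ] E) : E →L[ℝ] E) z₀ := by
    have h1 : HasFDerivAt g (π.comp T) z₀ := π.hasFDerivAt.comp z₀ hdiff.hasFDerivAt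
    have h2 : π.comp T = ((ContinuousLinearEquiv.refl ℝ E : E ≃L[ℝ] E) : E →L[ℝ] E) := by
      ext x; exact hπ x
    rwa [h2] at h1
  have hstrict := hgc.hasStrictFDerivAt' hgd (by exact_mod_cast (show k ≠ 0 by rintro rfl; simp at hk))
  set inv := hstrict.localInverse g _ z₀ with hinv
  have hinvCD : ContDiffAt ℝ k inv (g z₀) := hgc.to_localInverse hgd (by exact_mod_cast (show k ≠ 0 by rintro rfl; simp at hk))
  -- the left-inverse property on a neighborhood
  obtain ⟨t, ht, htinv⟩ := hstrict.eventually_left_inverse.exists_mem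
  -- continuity of ψ₁ ∘ φ₂ at p
  have hcont : ContinuousAt (ψ₁ ∘ φ₂) p := by
    have : ContinuousOn (ψ₁ ∘ φ₂) D₂ := by
      apply hψ₁.comp ((hφ₂.continuousOn).mono inter_subset_left)
      intro z hz; exact ⟨hz.2.1.1, hz.2.2⟩
    exact this.continuousAt (hD.mem_nhds hp)
  -- candidate smooth function
  have hgz₀ : g z₀ = π (φ₂ p) := by simp [g, hz₀eq]
  have hcand : ContDiffAt ℝ k (inv ∘ π ∘ φ₂) p := by
    have h1 : ContDiffAt ℝ k (π ∘ φ₂) p :=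
      π.contDiff.contDiffAt.comp p (hφ₂.contDiffAt (hO₂.mem_nhds hp.1))
    have h2 : ContDiffAt ℝ k inv ((π ∘ φ₂) p) := by
      have : (π ∘ φ₂) p = g z₀ := hgz₀.symm
      rw [this]; exact hinvCD
    exact h2.comp p h1
  -- eventual equality
  have heq : (ψ₁ ∘ φ₂) =ᶠ[nhds p] (inv ∘ π ∘ φ₂) := by
    have h1 : {z | (ψ₁ ∘ φ₂) z ∈ t} ∈ nhds p := by
      apply hcont.preimage_mem_nhds
      simpa [hψφ] using ht
    filter_upwards [hD.mem_nhds hp, h1] with z hz htz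
    have hzU : φ₂ z ∈ U₁ ∩ M := ⟨hz.2.1.1, hz.2.2⟩
    obtain ⟨w, hw, hweq⟩ : ∃ w ∈ O₁, φ₁ w = φ₂ z := by
      have : φ₂ z ∈ φ₁ '' O₁ := himg₁ ▸ hzU
      exact this.imp (fun a ha => ⟨ha.1, ha.2⟩)
    have hψw : ψ₁ (φ₂ z) = w := by rw [← hweq, hinv₁ w hw]
    have hwt : w ∈ t := by rwa [show (ψ₁ ∘ φ₂) z = w from hψw] at htz
    calc (ψ₁ ∘ φ₂) z = w := hψw
      _ = inv (g w) := (htinv w hwt).symm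
      _ = (inv ∘ π ∘ φ₂) z := by simp [g, hweq]
  exact hcand.congr_of_eventuallyEq heq



/-- Change of parametrization: given two local `C^k`-parametrizations
`φ₁ : O₁ → U₁ ∩ M`, `φ₂ : O₂ → U₂ ∩ M` of an `m`-dimensional `C^k`-submanifold
`M` of a Banach space `W` with `X := U₁ ∩ U₂ ∩ M ≠ ∅`, the transition map
`φ₁⁻¹ ∘ φ₂` is a `C^k`-diffeomorphism from `φ₂⁻¹(X)` onto `φ₁⁻¹(X)`. -/
theorem transition_map_diffeomorphism
    {W : Type*} [NormedAddCommGroup W] [NormedSpace ℝ W]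
    (m : ℕ) (k : ℕ∞) (hk : 1 ≤ k) (M : Set W)
    (O₁ O₂ : Set (EuclideanSpace ℝ (Fin m))) (U₁ U₂ : Set W)
    (φ₁ φ₂ : EuclideanSpace ℝ (Fin m) → W)
    (ψ₁ ψ₂ : W → EuclideanSpace ℝ (Fin m))
    (hO₁ : IsOpen O₁) (hO₂ : IsOpen O₂) (hU₁ : IsOpen U₁) (hU₂ : IsOpen U₂)
    -- φᵢ are C^k parametrizations of M:
    (hφ₁ : ContDiffOn ℝ k φ₁ O₁) (hφ₂ : ContDiffOn ℝ k φ₂ O₂)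
    (himg₁ : φ₁ '' O₁ = U₁ ∩ M) (himg₂ : φ₂ '' O₂ = U₂ ∩ M)
    -- with continuous inverses ψᵢ (homeomorphism onto the image):
    (hinv₁ : ∀ z ∈ O₁, ψ₁ (φ₁ z) = z) (hinv₂ : ∀ z ∈ O₂, ψ₂ (φ₂ z) = z)
    (hψ₁ : ContinuousOn ψ₁ (U₁ ∩ M)) (hψ₂ : ContinuousOn ψ₂ (U₂ ∩ M))
    -- and injective derivatives:
    (hder₁ : ∀ z ∈ O₁, Function.Injective (fderivWithin ℝ φ₁ O₁ z))
    (hder₂ : ∀ z ∈ O₂, Function.Injective (fderivWithin ℝ φ₂ O₂ z))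
    (hX : (U₁ ∩ U₂ ∩ M).Nonempty) :
    -- the domains of the transition maps are open:
    IsOpen (O₁ ∩ φ₁ ⁻¹' (U₁ ∩ U₂ ∩ M)) ∧ IsOpen (O₂ ∩ φ₂ ⁻¹' (U₁ ∩ U₂ ∩ M)) ∧
    -- φ₁⁻¹ ∘ φ₂ maps φ₂⁻¹(X) bijectively onto φ₁⁻¹(X), with C^k inverse φ₂⁻¹ ∘ φ₁:
    Set.BijOn (ψ₁ ∘ φ₂) (O₂ ∩ φ₂ ⁻¹' (U₁ ∩ U₂ ∩ M)) (O₁ ∩ φ₁ ⁻¹' (U₁ ∩ U₂ ∩ M)) ∧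
    (∀ z ∈ O₂ ∩ φ₂ ⁻¹' (U₁ ∩ U₂ ∩ M), (ψ₂ ∘ φ₁) ((ψ₁ ∘ φ₂) z) = z) ∧
    (∀ z ∈ O₁ ∩ φ₁ ⁻¹' (U₁ ∩ U₂ ∩ M), (ψ₁ ∘ φ₂) ((ψ₂ ∘ φ₁) z) = z) ∧
    ContDiffOn ℝ k (ψ₁ ∘ φ₂) (O₂ ∩ φ₂ ⁻¹' (U₁ ∩ U₂ ∩ M)) ∧
    ContDiffOn ℝ k (ψ₂ ∘ φ₁) (O₁ ∩ φ₁ ⁻¹' (U₁ ∩ U₂ ∩ M)) := by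
  have key : ∀ (O₁' O₂' : Set (EuclideanSpace ℝ (Fin m))) (U₁' U₂' : Set W)
      (φ₁' φ₂' : EuclideanSpace ℝ (Fin m) → W) (ψ₁' : W → EuclideanSpace ℝ (Fin m)),
      IsOpen O₂' → (φ₂' '' O₂' = U₂' ∩ M) → ContDiffOn ℝ k φ₂' O₂' → IsOpen U₁' →
      IsOpen (O₂' ∩ φ₂' ⁻¹' (U₁' ∩ U₂' ∩ M)) := by
    intro O₁' O₂' U₁' U₂' φ₁' φ₂' ψ₁' hO₂' himg₂' hφ₂' hU₁'
    have hset : O₂' ∩ φ₂' ⁻¹' (U₁' ∩ U₂' ∩ M) = O₂' ∩ φ₂' ⁻¹' U₁' := by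
      ext z
      constructor
      · rintro ⟨hz, h, _⟩; exact ⟨hz, h.1⟩
      · rintro ⟨hz, h⟩
        have : φ₂' z ∈ U₂' ∩ M := himg₂' ▸ Set.mem_image_of_mem _ hz
        exact ⟨hz, ⟨h, this.1⟩, this.2⟩
    rw [hset]
    exact (hφ₂'.continuousOn).isOpen_inter_preimage hO₂' hU₁'
  have hD₁ : IsOpen (O₁ ∩ φ₁ ⁻¹' (U₁ ∩ U₂ ∩ M)) := by
    have := key O₂ O₁ U₂ U₁ φ₂ φ₁ ψ₂ hO₁ himg₁ hφ₁ hU₂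
    have hcomm : U₂ ∩ U₁ ∩ M = U₁ ∩ U₂ ∩ M := by rw [Set.inter_comm U₂ U₁]
    rwa [hcomm] at this
  have hD₂ : IsOpen (O₂ ∩ φ₂ ⁻¹' (U₁ ∩ U₂ ∩ M)) :=
    key O₁ O₂ U₁ U₂ φ₁ φ₂ ψ₁ hO₂ himg₂ hφ₂ hU₁
  -- selection of preimage points
  have pre : ∀ {φ : EuclideanSpace ℝ (Fin m) → W} {ψ : W → EuclideanSpace ℝ (Fin m)}
      {O : Set (EuclideanSpace ℝ (Fin m))} {U : Set W},
      (φ '' O = U ∩ M) → (∀ z ∈ O, ψ (φ z) = z) →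
      ∀ x ∈ U ∩ M, ψ x ∈ O ∧ φ (ψ x) = x := by
    intro φ ψ O U himg hinv x hx
    obtain ⟨w, hw, hweq⟩ : ∃ w ∈ O, φ w = x := by
      have : x ∈ φ '' O := himg ▸ hx
      exact this.imp (fun a ha => ⟨ha.1, ha.2⟩)
    have : ψ x = w := by rw [← hweq, hinv w hw]
    rw [this]; exact ⟨hw, hweq⟩
  have hmaps : ∀ z ∈ O₂ ∩ φ₂ ⁻¹' (U₁ ∩ U₂ ∩ M),
      (ψ₁ ∘ φ₂) z ∈ O₁ ∩ φ₁ ⁻¹' (U₁ ∩ U₂ ∩ M) := by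
    rintro z ⟨hz, hzX⟩
    obtain ⟨h1, h2⟩ := pre himg₁ hinv₁ (φ₂ z) ⟨hzX.1.1, hzX.2⟩
    exact ⟨h1, by simpa [Set.mem_preimage, h2] using hzX⟩
  have hmaps' : ∀ z ∈ O₁ ∩ φ₁ ⁻¹' (U₁ ∩ U₂ ∩ M),
      (ψ₂ ∘ φ₁) z ∈ O₂ ∩ φ₂ ⁻¹' (U₁ ∩ U₂ ∩ M) := by
    rintro z ⟨hz, hzX⟩
    obtain ⟨h1, h2⟩ := pre himg₂ hinv₂ (φ₁ z) ⟨hzX.1.2, hzX.2⟩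
    exact ⟨h1, by simpa [Set.mem_preimage, h2] using hzX⟩
  have hleft : ∀ z ∈ O₂ ∩ φ₂ ⁻¹' (U₁ ∩ U₂ ∩ M), (ψ₂ ∘ φ₁) ((ψ₁ ∘ φ₂) z) = z := by
    rintro z ⟨hz, hzX⟩
    obtain ⟨h1, h2⟩ := pre himg₁ hinv₁ (φ₂ z) ⟨hzX.1.1, hzX.2⟩
    simp only [Function.comp_apply, h2, hinv₂ z hz]
  have hright : ∀ z ∈ O₁ ∩ φ₁ ⁻¹' (U₁ ∩ U₂ ∩ M), (ψ₁ ∘ φ₂) ((ψ₂ ∘ φ₁) z) = z := by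
    rintro z ⟨hz, hzX⟩
    obtain ⟨h1, h2⟩ := pre himg₂ hinv₂ (φ₁ z) ⟨hzX.1.2, hzX.2⟩
    simp only [Function.comp_apply, h2, hinv₁ z hz]
  refine ⟨hD₁, hD₂, ?_, hleft, hright, ?_, ?_⟩
  · refine ⟨hmaps, ?_, ?_⟩
    · intro a ha b hb hab
      have := congrArg (ψ₂ ∘ φ₁) hab
      rwa [hleft a ha, hleft b hb] at this
    · intro w hw
      exact ⟨(ψ₂ ∘ φ₁) w, hmaps' w hw, hright w hw⟩
  · exact transition_contDiffOn hk hO₁ hO₂ hφ₁ hφ₂ himg₁ hinv₁ hψ₁ hder₁ hD₂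
  · have hcomm : U₁ ∩ U₂ ∩ M = U₂ ∩ U₁ ∩ M := by rw [Set.inter_comm U₁ U₂]
    rw [hcomm] at hD₁ ⊢
    exact transition_contDiffOn hk hO₂ hO₁ hφ₂ hφ₁ himg₂ hinv₂ hψ₂ hder₂ hD₁
end

section
/- Let X be a controlled rough path Z with values in E satisfying Z' = g(Z), and Y a controlled rough path in W satisfying Y' = f(Y), with Y = φ(Z) for φ ∈ C³_b(E, W), where X is truly rough. Then the second-order Gubinelli derivative decomposes as Df(Y)f(Y) = Dφ(Z) Dg(Z) g(Z) + D²φ(Z)(g(Z), g(Z)) as paths with values in L(V, L(V, W)) (equivalently L(V ⊗ V, W)). -/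
open Filter Topology Set


section Helpers

variable {E F : Type*} [NormedAddCommGroup E] [NormedSpace ℝ E]
  [NormedAddCommGroup F] [NormedSpace ℝ F]

lemma lip_of_fderiv_bound {f : E → F} (hf : Differentiable ℝ f) {C : ℝ}
    (hC : ∀ x, ‖fderiv ℝ f x‖ ≤ C) (a b : E) : ‖f b - f a‖ ≤ C * ‖b - a‖ :=
  convex_univ.norm_image_sub_le_of_norm_fderiv_le (fun x _ => hf x)
    (fun x _ => hC x) trivial trivial

lemma norm_fderiv_eq_iterated (f : E → F) (x : E) :
    ‖fderiv ℝ f x‖ = ‖iteratedFDeriv ℝ 1 f x‖ := by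
  rw [← norm_iteratedFDeriv_fderiv (n := 0), norm_iteratedFDeriv_zero]

lemma norm_fderiv2_eq (f : E → F) (x : E) :
    ‖fderiv ℝ (fderiv ℝ f) x‖ = ‖iteratedFDeriv ℝ 2 f x‖ := by
  rw [norm_fderiv_eq_iterated, norm_iteratedFDeriv_fderiv (n := 1)]

lemma taylor2 {f : E → F} (hf : Differentiable ℝ f) {C : ℝ}
    (hC : ∀ x y, ‖fderiv ℝ f x - fderiv ℝ f y‖ ≤ C * ‖x - y‖) (a b : E) :
    ‖f b - f a - fderiv ℝ f a (b - a)‖ ≤ C * ‖b - a‖ ^ 2 := by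
  have h := (convex_segment a b).norm_image_sub_le_of_norm_fderiv_le'
    (f := f) (φ := fderiv ℝ f a) (C := C * ‖b - a‖)
    (fun x _ => hf x)
    (fun x hx => by
      rcases hx with ⟨u, v, hu, hv, huv, rfl⟩
      have hx : u • a + v • b - a = v • (b - a) := by
        have : u = 1 - v := by linarith
        rw [this]; module
      calc ‖fderiv ℝ f (u • a + v • b) - fderiv ℝ f a‖
          ≤ C * ‖u • a + v • b - a‖ := hC _ _
        _ = C * (v * ‖b - a‖) := by rw [hx, norm_smul, Real.norm_eq_abs, abs_of_nonneg hv]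
        _ ≤ C * (1 * ‖b - a‖) := by
            rcases le_or_gt 0 C with h0 | h0
            · have : v ≤ 1 := by linarith
              have := mul_le_mul_of_nonneg_left
                (mul_le_mul_of_nonneg_right this (norm_nonneg (b - a))) h0
              linarith
            · nlinarith [hC b a, norm_nonneg (fderiv ℝ f b - fderiv ℝ f a),
                norm_nonneg (b - a), mul_nonneg hv (norm_nonneg (b - a))]
        _ = C * ‖b - a‖ := by ring)
    (left_mem_segment ℝ a b) (right_mem_segment ℝ a b)
  calc ‖f b - f a - fderiv ℝ f a (b - a)‖ ≤ C * ‖b - a‖ * ‖b - a‖ := h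
    _ = C * ‖b - a‖ ^ 2 := by ring

omit [NormedSpace ℝ F] in
lemma cont_of_holder {f : ℝ → F} {C α T : ℝ} (hα : 0 < α)
    (h : ∀ s ∈ Icc (0:ℝ) T, ∀ t ∈ Icc (0:ℝ) T, ‖f t - f s‖ ≤ C * |t - s| ^ α) :
    ContinuousOn f (Icc 0 T) := by
  intro s hs
  have h1 : Tendsto (fun t : ℝ => |t - s|) (𝓝[Icc 0 T] s) (𝓝 0) := by
    have : Tendsto (fun t : ℝ => |t - s|) (𝓝 s) (𝓝 |s - s|) :=
      (continuous_abs.comp (continuous_id.sub continuous_const)).tendsto s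
    simpa using this.mono_left nhdsWithin_le_nhds
  have h2 : Tendsto (fun t : ℝ => C * |t - s| ^ α) (𝓝[Icc 0 T] s) (𝓝 0) := by
    have h3 := h1.rpow_const (p := α) (Or.inr hα.le)
    rw [Real.zero_rpow hα.ne'] at h3
    simpa using h3.const_mul C
  have : Tendsto (fun t => ‖f t - f s‖) (𝓝[Icc 0 T] s) (𝓝 0) := by
    apply squeeze_zero' (Eventually.of_forall fun t => norm_nonneg _) ?_ h2
    filter_upwards [self_mem_nhdsWithin] with t ht
    exact h s hs t ht
  rw [ContinuousWithinAt, tendsto_iff_norm_sub_tendsto_zero]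
  exact this

lemma rpow_two_mul {x : ℝ} (α : ℝ) (hx : 0 ≤ x) : (x ^ α) ^ 2 = x ^ (2 * α) := by
  rw [← Real.rpow_natCast (x ^ α) 2, ← Real.rpow_mul hx]
  norm_num [mul_comm]

end Helpers

/-- `(Y, Y')` is a rough path controlled by `X` on `[0,T]` with Hölder exponent `α`:
`Y` and `Y'` are `α`-Hölder on `[0,T]` and the Gubinelli remainder
`Y_{s,t} − Y'_s X_{s,t}` is `2α`-Hölder. -/
def IsControlledBy {V W : Type*} [NormedAddCommGroup V] [NormedSpace ℝ V]
    [NormedAddCommGroup W] [NormedSpace ℝ W]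
    (α T : ℝ) (X : ℝ → V) (Y : ℝ → W) (Y' : ℝ → V →L[ℝ] W) : Prop :=
  (∃ C, ∀ s ∈ Icc (0:ℝ) T, ∀ t ∈ Icc (0:ℝ) T, ‖Y t - Y s‖ ≤ C * |t - s| ^ α) ∧
  (∃ C, ∀ s ∈ Icc (0:ℝ) T, ∀ t ∈ Icc (0:ℝ) T, ‖Y' t - Y' s‖ ≤ C * |t - s| ^ α) ∧
  (∃ C, ∀ s ∈ Icc (0:ℝ) T, ∀ t ∈ Icc (0:ℝ) T,
    ‖Y t - Y s - Y' s (X t - X s)‖ ≤ C * |t - s| ^ (2 * α))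

/-- `X` is truly rough on `[0,T)`: there is a dense subset `D` of `[0,T)` such that
for every `s ∈ D` and every nonzero continuous functional `v`,
`limsup_{t ↓ s} |v(X_{s,t})| / |t−s|^{2α} = ∞`. -/
def TrulyRough {V : Type*} [NormedAddCommGroup V] [NormedSpace ℝ V]
    (α T : ℝ) (X : ℝ → V) : Prop :=
  ∃ D ⊆ Ico (0:ℝ) T, (Ico (0:ℝ) T ⊆ closure D) ∧
    ∀ s ∈ D, ∀ v : V →L[ℝ] ℝ, v ≠ 0 →
      ∀ M : ℝ, ∃ᶠ t in 𝓝[>] s, M * |t - s| ^ (2 * α) ≤ |v (X t - X s)|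

lemma unique_gubinelli_deriv {V W₀ : Type*} [NormedAddCommGroup V] [NormedSpace ℝ V]
    [NormedAddCommGroup W₀] [NormedSpace ℝ W₀]
    {α T : ℝ} (hT : 0 < T) {X : ℝ → V} (hX : TrulyRough α T X)
    {A : ℝ → W₀} {A1 A2 : ℝ → V →L[ℝ] W₀}
    (h1 : ∃ C, ∀ s ∈ Icc (0:ℝ) T, ∀ t ∈ Icc (0:ℝ) T,
      ‖A t - A s - A1 s (X t - X s)‖ ≤ C * |t - s| ^ (2 * α))
    (h2 : ∃ C, ∀ s ∈ Icc (0:ℝ) T, ∀ t ∈ Icc (0:ℝ) T,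
      ‖A t - A s - A2 s (X t - X s)‖ ≤ C * |t - s| ^ (2 * α))
    (hc : ContinuousOn (fun s => A1 s - A2 s) (Icc 0 T)) :
    ∀ t ∈ Icc (0:ℝ) T, A1 t = A2 t := by
  obtain ⟨C1, h1⟩ := h1
  obtain ⟨C2, h2⟩ := h2
  obtain ⟨D, hD, hDdense, hrough⟩ := hX
  have key : ∀ s ∈ D, A1 s - A2 s = 0 := by
    intro s hs
    have hsIco : s ∈ Ico (0:ℝ) T := hD hs
    have hsI : s ∈ Icc (0:ℝ) T := Ico_subset_Icc_self hsIco
    by_contra hne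
    have hex : ∃ u : V, (A1 s - A2 s) u ≠ 0 := by
      by_contra h; push_neg at h
      exact hne (ContinuousLinearMap.ext fun u => by simpa using h u)
    obtain ⟨u, hu⟩ := hex
    obtain ⟨ψ, hψn, hψx⟩ := exists_dual_vector ℝ _ (norm_ne_zero_iff.mpr hu)
    set v : V →L[ℝ] ℝ := ψ.comp (A1 s - A2 s) with hv
    have hv0 : v ≠ 0 := by
      intro h
      have h2 : v u = 0 := by rw [h]; rfl
      rw [hv, ContinuousLinearMap.comp_apply, hψx] at h2
      exact hu (by simpa [norm_eq_zero] using h2)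
    have hfreq := hrough s hs v hv0 (C1 + C2 + 1)
    have hev : ∀ᶠ t in 𝓝[>] s, t ∈ Icc (0:ℝ) T := by
      have h3 : Iio T ∈ 𝓝[>] s := nhdsWithin_le_nhds (Iio_mem_nhds hsIco.2)
      filter_upwards [h3, self_mem_nhdsWithin] with t ht hts
      exact ⟨le_of_lt (lt_of_le_of_lt hsIco.1 hts), le_of_lt ht⟩
    obtain ⟨t, hbig, htI, hts⟩ :=
      (hfreq.and_eventually (hev.and self_mem_nhdsWithin)).exists
    have hΔ : ‖(A1 s - A2 s) (X t - X s)‖ ≤ (C1 + C2) * |t - s| ^ (2 * α) := by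
      have heq : (A1 s - A2 s) (X t - X s)
          = (A t - A s - A2 s (X t - X s)) - (A t - A s - A1 s (X t - X s)) := by
        simp only [ContinuousLinearMap.sub_apply]; abel
      rw [heq]
      calc ‖(A t - A s - A2 s (X t - X s)) - (A t - A s - A1 s (X t - X s))‖
          ≤ ‖A t - A s - A2 s (X t - X s)‖ + ‖A t - A s - A1 s (X t - X s)‖ :=
            norm_sub_le _ _
        _ ≤ C2 * |t - s| ^ (2 * α) + C1 * |t - s| ^ (2 * α) :=
            add_le_add (h2 s hsI t htI) (h1 s hsI t htI)
        _ = (C1 + C2) * |t - s| ^ (2 * α) := by ring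
    have hvb : |v (X t - X s)| ≤ (C1 + C2) * |t - s| ^ (2 * α) := by
      calc |v (X t - X s)| = ‖ψ ((A1 s - A2 s) (X t - X s))‖ := by
            rw [hv]; rfl
        _ ≤ ‖ψ‖ * ‖(A1 s - A2 s) (X t - X s)‖ := ψ.le_opNorm _
        _ = ‖(A1 s - A2 s) (X t - X s)‖ := by rw [hψn, one_mul]
        _ ≤ (C1 + C2) * |t - s| ^ (2 * α) := hΔ
    have hpos : 0 < |t - s| ^ (2 * α) := by
      apply Real.rpow_pos_of_pos
      rw [abs_pos, sub_ne_zero]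
      exact ne_of_gt hts
    nlinarith [le_trans hbig hvb]
  intro t ht
  have htc : t ∈ closure D := by
    have h4 : Icc (0:ℝ) T ⊆ closure (Ico (0:ℝ) T) := by
      rw [closure_Ico hT.ne]
    exact closure_minimal hDdense isClosed_closure (h4 ht)
  have hDsub : D ⊆ Icc (0:ℝ) T := hD.trans Ico_subset_Icc_self
  have hcw : ContinuousWithinAt (fun s => A1 s - A2 s) D t := (hc t ht).mono hDsub
  have hmem := hcw.mem_closure_image htc
  have himg : (fun s => A1 s - A2 s) '' D ⊆ {0} := by
    rintro _ ⟨s, hsD, rfl⟩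
    exact key s hsD
  have : A1 t - A2 t ∈ closure ({0} : Set (V →L[ℝ] W₀)) :=
    closure_mono himg hmem
  rw [closure_singleton, mem_singleton_iff] at this
  exact sub_eq_zero.mp this

set_option maxHeartbeats 2000000 in
/-- Decomposition of the second-order Gubinelli derivative: if `X` is truly rough,
`(Z, g(Z))` and `(Y, f(Y))` are controlled rough paths and `Y = φ(Z)`, then
`Df(Y)f(Y) = Dφ(Z) Dg(Z) g(Z) + D²φ(Z)(g(Z), g(Z))` in `L(V, L(V,W))`. -/
theorem gubinelli_second_derivative_decomposition
    {V W E : Type*} [NormedAddCommGroup V] [NormedSpace ℝ V]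
    [NormedAddCommGroup W] [NormedSpace ℝ W] [CompleteSpace W]
    [NormedAddCommGroup E] [NormedSpace ℝ E] [CompleteSpace E]
    (α T : ℝ) (hα : α ∈ Set.Ioc (1/3 : ℝ) (1/2)) (hT : 0 < T)
    (X : ℝ → V) (hX : TrulyRough α T X)
    (f : W → V →L[ℝ] W) (hf : ContDiff ℝ 2 f)
    (hfb : ∀ i : ℕ, i ≤ 2 → ∃ C, ∀ y, ‖iteratedFDeriv ℝ i f y‖ ≤ C)
    (g : E → V →L[ℝ] E) (hg : ContDiff ℝ 2 g)
    (hgb : ∀ i : ℕ, i ≤ 2 → ∃ C, ∀ z, ‖iteratedFDeriv ℝ i g z‖ ≤ C)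
    (φ : E → W) (hφ : ContDiff ℝ 3 φ)
    (hφb : ∀ i : ℕ, i ≤ 3 → ∃ C, ∀ z, ‖iteratedFDeriv ℝ i φ z‖ ≤ C)
    (Z : ℝ → E) (hZ : IsControlledBy α T X Z (fun t => g (Z t)))
    (Y : ℝ → W) (hY : IsControlledBy α T X Y (fun t => f (Y t)))
    (hYZ : ∀ t ∈ Icc (0:ℝ) T, Y t = φ (Z t)) :
    ∀ t ∈ Icc (0:ℝ) T, ∀ v w : V,
      (fderiv ℝ f (Y t) (f (Y t) v)) w
        = fderiv ℝ φ (Z t) ((fderiv ℝ g (Z t) (g (Z t) v)) w)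
          + (fderiv ℝ (fderiv ℝ φ) (Z t) (g (Z t) v)) (g (Z t) w) := by
  have hα0 : 0 < α := lt_trans (by norm_num) hα.1
  -- constants
  obtain ⟨Cf1, hCf1⟩ := hfb 1 (by norm_num)
  obtain ⟨Cf2, hCf2⟩ := hfb 2 le_rfl
  obtain ⟨Cg0, hCg0⟩ := hgb 0 (by norm_num)
  obtain ⟨Cg1, hCg1⟩ := hgb 1 (by norm_num)
  obtain ⟨Cg2, hCg2⟩ := hgb 2 le_rfl
  obtain ⟨Cφ1, hCφ1⟩ := hφb 1 (by norm_num)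
  obtain ⟨Cφ2, hCφ2⟩ := hφb 2 (by norm_num)
  obtain ⟨Cφ3, hCφ3⟩ := hφb 3 le_rfl
  have hfd1 : ∀ y, ‖fderiv ℝ f y‖ ≤ Cf1 := fun y => by
    rw [norm_fderiv_eq_iterated]; exact hCf1 y
  have hfd2 := fun y => (norm_fderiv2_eq f y).trans_le (hCf2 y)
  have hgd0 : ∀ z, ‖g z‖ ≤ Cg0 := fun z => by
    rw [← norm_iteratedFDeriv_zero (𝕜 := ℝ)]; exact hCg0 z
  have hgd1 : ∀ z, ‖fderiv ℝ g z‖ ≤ Cg1 := fun z => by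
    rw [norm_fderiv_eq_iterated]; exact hCg1 z
  have hgd2 := fun z => (norm_fderiv2_eq g z).trans_le (hCg2 z)
  have hφd1 : ∀ z, ‖fderiv ℝ φ z‖ ≤ Cφ1 := fun z => by
    rw [norm_fderiv_eq_iterated]; exact hCφ1 z
  have hφd2 : ∀ z, ‖fderiv ℝ (fderiv ℝ φ) z‖ ≤ Cφ2 := fun z => by
    rw [norm_fderiv2_eq]; exact hCφ2 z
  have hφd3 := fun z => (norm_fderiv2_eq (fderiv ℝ φ) z).trans_le
    ((norm_iteratedFDeriv_fderiv (𝕜 := ℝ) (n := 2) (f := φ) (x := z)).trans_le (hCφ3 z))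
  -- nonnegativity of constants
  have hCf1nn : 0 ≤ Cf1 := le_trans (ContinuousLinearMap.opNorm_nonneg _) (hfd1 0)
  have hCf2nn : 0 ≤ Cf2 := le_trans (ContinuousLinearMap.opNorm_nonneg _) (hfd2 0)
  have hCg0nn : 0 ≤ Cg0 := le_trans (ContinuousLinearMap.opNorm_nonneg _) (hgd0 0)
  have hCg1nn : 0 ≤ Cg1 := le_trans (ContinuousLinearMap.opNorm_nonneg _) (hgd1 0)
  have hCg2nn : 0 ≤ Cg2 := le_trans (ContinuousLinearMap.opNorm_nonneg _) (hgd2 0)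
  have hCφ1nn : 0 ≤ Cφ1 := le_trans (ContinuousLinearMap.opNorm_nonneg _) (hφd1 0)
  have hCφ2nn : 0 ≤ Cφ2 := le_trans (ContinuousLinearMap.opNorm_nonneg _) (hφd2 0)
  have hCφ3nn : 0 ≤ Cφ3 := le_trans (ContinuousLinearMap.opNorm_nonneg _) (hφd3 0)
  -- differentiability
  have hfdiff : Differentiable ℝ f := hf.differentiable two_ne_zero
  have hgdiff : Differentiable ℝ g := hg.differentiable two_ne_zero
  have hφdiff : Differentiable ℝ φ := hφ.differentiable (by norm_num)
  have hφ'C2 : ContDiff ℝ 2 (fderiv ℝ φ) := hφ.fderiv_right (by norm_num)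
  have hφ'diff : Differentiable ℝ (fderiv ℝ φ) := hφ'C2.differentiable two_ne_zero
  have hφ''diff : Differentiable ℝ (fderiv ℝ (fderiv ℝ φ)) :=
    (hφ'C2.fderiv_right (by norm_num)).differentiable one_ne_zero
  have hf'diff : Differentiable ℝ (fderiv ℝ f) :=
    (hf.fderiv_right (by norm_num)).differentiable one_ne_zero
  have hg'diff : Differentiable ℝ (fderiv ℝ g) :=
    (hg.fderiv_right (by norm_num)).differentiable one_ne_zero
  -- Lipschitz bounds on derivatives
  have hf'lip : ∀ x y, ‖fderiv ℝ f x - fderiv ℝ f y‖ ≤ Cf2 * ‖x - y‖ :=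
    fun x y => lip_of_fderiv_bound hf'diff hfd2 y x
  have hg'lip : ∀ x y, ‖fderiv ℝ g x - fderiv ℝ g y‖ ≤ Cg2 * ‖x - y‖ :=
    fun x y => lip_of_fderiv_bound hg'diff hgd2 y x
  have hφ'lip : ∀ x y, ‖fderiv ℝ φ x - fderiv ℝ φ y‖ ≤ Cφ2 * ‖x - y‖ :=
    fun x y => lip_of_fderiv_bound hφ'diff hφd2 y x
  have hφ''lip : ∀ x y, ‖fderiv ℝ (fderiv ℝ φ) x - fderiv ℝ (fderiv ℝ φ) y‖ ≤ Cφ3 * ‖x - y‖ :=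
    fun x y => lip_of_fderiv_bound hφ''diff hφd3 y x
  have hglip : ∀ x y, ‖g x - g y‖ ≤ Cg1 * ‖x - y‖ :=
    fun x y => lip_of_fderiv_bound hgdiff hgd1 y x
  -- Hölder data
  obtain ⟨⟨CZ, hCZ⟩, -, ⟨CZR, hCZR⟩⟩ := hZ
  obtain ⟨⟨CY, hCY⟩, -, ⟨CYR, hCYR⟩⟩ := hY
  have hZcont : ContinuousOn Z (Icc 0 T) := cont_of_holder hα0 hCZ
  have hYcont : ContinuousOn Y (Icc 0 T) := cont_of_holder hα0 hCY
  have hpow : ∀ s t : ℝ, (|t - s| ^ α) ^ 2 = |t - s| ^ (2 * α) :=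
    fun s t => rpow_two_mul α (abs_nonneg _)
  have hrpownn : ∀ s t : ℝ, (0:ℝ) ≤ |t - s| ^ α :=
    fun s t => Real.rpow_nonneg (abs_nonneg _) α
  -- the map ψ and its derivative
  set ψ : E → V →L[ℝ] W := fun z => (fderiv ℝ φ z).comp (g z) with hψdef
  set Dψ : E → E →L[ℝ] V →L[ℝ] W := fun z =>
    ((ContinuousLinearMap.compL ℝ V E W (fderiv ℝ φ z)).comp (fderiv ℝ g z)) +
    (((ContinuousLinearMap.compL ℝ V E W).flip (g z)).comp
      (fderiv ℝ (fderiv ℝ φ) z)) with hDψdef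
  have hψd : ∀ z, HasFDerivAt ψ (Dψ z) z := fun z =>
    (hφ'diff z).hasFDerivAt.clm_comp (hgdiff z).hasFDerivAt
  have hψfd : ∀ z, fderiv ℝ ψ z = Dψ z := fun z => (hψd z).fderiv
  have hψdiff : Differentiable ℝ ψ := fun z => (hψd z).differentiableAt
  have hDψapp : ∀ z h, Dψ z h = (fderiv ℝ φ z).comp (fderiv ℝ g z h)
      + ((fderiv ℝ (fderiv ℝ φ) z h).comp (g z)) := fun z h => by
    simp [hDψdef, ContinuousLinearMap.flip_apply]
  -- bound on Dψ
  have hDψb : ∀ z, ‖Dψ z‖ ≤ Cφ1 * Cg1 + Cφ2 * Cg0 := by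
    intro z
    apply ContinuousLinearMap.opNorm_le_bound _
      (by positivity)
    intro h
    rw [hDψapp]
    calc ‖(fderiv ℝ φ z).comp (fderiv ℝ g z h)
          + (fderiv ℝ (fderiv ℝ φ) z h).comp (g z)‖
        ≤ ‖(fderiv ℝ φ z).comp (fderiv ℝ g z h)‖
          + ‖(fderiv ℝ (fderiv ℝ φ) z h).comp (g z)‖ := norm_add_le _ _
      _ ≤ ‖fderiv ℝ φ z‖ * ‖fderiv ℝ g z h‖
          + ‖fderiv ℝ (fderiv ℝ φ) z h‖ * ‖g z‖ :=
          add_le_add (ContinuousLinearMap.opNorm_comp_le _ _)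
            (ContinuousLinearMap.opNorm_comp_le _ _)
      _ ≤ Cφ1 * (Cg1 * ‖h‖) + Cφ2 * ‖h‖ * Cg0 := by
          refine add_le_add (mul_le_mul (hφd1 z) ?_ (norm_nonneg _) hCφ1nn)
            (mul_le_mul ?_ (hgd0 z) (norm_nonneg _) (by positivity))
          · exact le_trans ((fderiv ℝ g z).le_opNorm h)
              (mul_le_mul_of_nonneg_right (hgd1 z) (norm_nonneg h))
          · exact le_trans ((fderiv ℝ (fderiv ℝ φ) z).le_opNorm h)
              (mul_le_mul_of_nonneg_right (hφd2 z) (norm_nonneg h))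
      _ = (Cφ1 * Cg1 + Cφ2 * Cg0) * ‖h‖ := by ring
  -- Lipschitz bound on Dψ
  have hDψlip : ∀ z z', ‖Dψ z - Dψ z'‖
      ≤ (Cφ1 * Cg2 + Cφ2 * Cg1 + Cφ3 * Cg0 + Cφ2 * Cg1) * ‖z - z'‖ := by
    intro z z'
    apply ContinuousLinearMap.opNorm_le_bound _
      (mul_nonneg (by positivity) (norm_nonneg _))
    intro h
    have expand : (Dψ z - Dψ z') h
        = (fderiv ℝ φ z).comp (fderiv ℝ g z h - fderiv ℝ g z' h)
          + (fderiv ℝ φ z - fderiv ℝ φ z').comp (fderiv ℝ g z' h)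
          + (fderiv ℝ (fderiv ℝ φ) z h - fderiv ℝ (fderiv ℝ φ) z' h).comp (g z)
          + (fderiv ℝ (fderiv ℝ φ) z' h).comp (g z - g z') := by
      rw [ContinuousLinearMap.sub_apply, hDψapp, hDψapp]
      ext w
      simp only [ContinuousLinearMap.sub_apply, ContinuousLinearMap.add_apply,
        ContinuousLinearMap.comp_apply, ContinuousLinearMap.map_sub]
      abel
    rw [expand]
    have t1 : ‖(fderiv ℝ φ z).comp (fderiv ℝ g z h - fderiv ℝ g z' h)‖
        ≤ Cφ1 * (Cg2 * ‖z - z'‖ * ‖h‖) := by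
      refine le_trans (ContinuousLinearMap.opNorm_comp_le _ _) ?_
      refine mul_le_mul (hφd1 z) ?_ (norm_nonneg _) hCφ1nn
      have : fderiv ℝ g z h - fderiv ℝ g z' h = (fderiv ℝ g z - fderiv ℝ g z') h := by
        simp [ContinuousLinearMap.sub_apply]
      rw [this]
      exact le_trans ((fderiv ℝ g z - fderiv ℝ g z').le_opNorm h)
        (mul_le_mul_of_nonneg_right (hg'lip z z') (norm_nonneg h))
    have t2 : ‖(fderiv ℝ φ z - fderiv ℝ φ z').comp (fderiv ℝ g z' h)‖
        ≤ Cφ2 * ‖z - z'‖ * (Cg1 * ‖h‖) := by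
      refine le_trans (ContinuousLinearMap.opNorm_comp_le _ _) ?_
      refine mul_le_mul (hφ'lip z z') ?_ (norm_nonneg _) (by positivity)
      exact le_trans ((fderiv ℝ g z').le_opNorm h)
        (mul_le_mul_of_nonneg_right (hgd1 z') (norm_nonneg h))
    have t3 : ‖(fderiv ℝ (fderiv ℝ φ) z h - fderiv ℝ (fderiv ℝ φ) z' h).comp (g z)‖
        ≤ Cφ3 * ‖z - z'‖ * ‖h‖ * Cg0 := by
      refine le_trans (ContinuousLinearMap.opNorm_comp_le _ _) ?_
      refine mul_le_mul ?_ (hgd0 z) (norm_nonneg _) (by positivity)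
      have : fderiv ℝ (fderiv ℝ φ) z h - fderiv ℝ (fderiv ℝ φ) z' h
          = (fderiv ℝ (fderiv ℝ φ) z - fderiv ℝ (fderiv ℝ φ) z') h := by
        simp [ContinuousLinearMap.sub_apply]
      rw [this]
      exact le_trans ((fderiv ℝ (fderiv ℝ φ) z - fderiv ℝ (fderiv ℝ φ) z').le_opNorm h)
        (mul_le_mul_of_nonneg_right (hφ''lip z z') (norm_nonneg h))
    have t4 : ‖(fderiv ℝ (fderiv ℝ φ) z' h).comp (g z - g z')‖
        ≤ Cφ2 * ‖h‖ * (Cg1 * ‖z - z'‖) := by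
      refine le_trans (ContinuousLinearMap.opNorm_comp_le _ _) ?_
      refine mul_le_mul ?_ (hglip z z') (norm_nonneg _) (by positivity)
      exact le_trans ((fderiv ℝ (fderiv ℝ φ) z').le_opNorm h)
        (mul_le_mul_of_nonneg_right (hφd2 z') (norm_nonneg h))
    calc ‖(fderiv ℝ φ z).comp (fderiv ℝ g z h - fderiv ℝ g z' h)
          + (fderiv ℝ φ z - fderiv ℝ φ z').comp (fderiv ℝ g z' h)
          + (fderiv ℝ (fderiv ℝ φ) z h - fderiv ℝ (fderiv ℝ φ) z' h).comp (g z)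
          + (fderiv ℝ (fderiv ℝ φ) z' h).comp (g z - g z')‖
        ≤ ‖(fderiv ℝ φ z).comp (fderiv ℝ g z h - fderiv ℝ g z' h)
          + (fderiv ℝ φ z - fderiv ℝ φ z').comp (fderiv ℝ g z' h)
          + (fderiv ℝ (fderiv ℝ φ) z h - fderiv ℝ (fderiv ℝ φ) z' h).comp (g z)‖
          + ‖(fderiv ℝ (fderiv ℝ φ) z' h).comp (g z - g z')‖ := norm_add_le _ _
      _ ≤ ‖(fderiv ℝ φ z).comp (fderiv ℝ g z h - fderiv ℝ g z' h)
          + (fderiv ℝ φ z - fderiv ℝ φ z').comp (fderiv ℝ g z' h)‖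
          + ‖(fderiv ℝ (fderiv ℝ φ) z h - fderiv ℝ (fderiv ℝ φ) z' h).comp (g z)‖
          + ‖(fderiv ℝ (fderiv ℝ φ) z' h).comp (g z - g z')‖ := by
          gcongr; exact norm_add_le _ _
      _ ≤ ‖(fderiv ℝ φ z).comp (fderiv ℝ g z h - fderiv ℝ g z' h)‖
          + ‖(fderiv ℝ φ z - fderiv ℝ φ z').comp (fderiv ℝ g z' h)‖
          + ‖(fderiv ℝ (fderiv ℝ φ) z h - fderiv ℝ (fderiv ℝ φ) z' h).comp (g z)‖
          + ‖(fderiv ℝ (fderiv ℝ φ) z' h).comp (g z - g z')‖ := by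
          gcongr; exact norm_add_le _ _
      _ ≤ Cφ1 * (Cg2 * ‖z - z'‖ * ‖h‖) + Cφ2 * ‖z - z'‖ * (Cg1 * ‖h‖)
          + Cφ3 * ‖z - z'‖ * ‖h‖ * Cg0 + Cφ2 * ‖h‖ * (Cg1 * ‖z - z'‖) := by
          exact add_le_add (add_le_add (add_le_add t1 t2) t3) t4
      _ = (Cφ1 * Cg2 + Cφ2 * Cg1 + Cφ3 * Cg0 + Cφ2 * Cg1) * ‖z - z'‖ * ‖h‖ := by ring
  -- Taylor estimates
  have hφtaylor : ∀ a b : E, ‖φ b - φ a - fderiv ℝ φ a (b - a)‖ ≤ Cφ2 * ‖b - a‖ ^ 2 :=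
    taylor2 hφdiff hφ'lip
  have hftaylor : ∀ a b : W, ‖f b - f a - fderiv ℝ f a (b - a)‖ ≤ Cf2 * ‖b - a‖ ^ 2 :=
    taylor2 hfdiff hf'lip
  have hψtaylor : ∀ a b : E, ‖ψ b - ψ a - Dψ a (b - a)‖
      ≤ (Cφ1 * Cg2 + Cφ2 * Cg1 + Cφ3 * Cg0 + Cφ2 * Cg1) * ‖b - a‖ ^ 2 := by
    intro a b
    have := taylor2 hψdiff (fun x y => by rw [hψfd, hψfd]; exact hDψlip x y) a b
    rwa [hψfd] at this
  -- Step B: f (Y t) = ψ (Z t) on [0,T]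
  have hB : ∀ t ∈ Icc (0:ℝ) T, f (Y t) = ψ (Z t) := by
    apply unique_gubinelli_deriv hT hX (A := Y)
    · exact ⟨CYR, fun s hs t ht => hCYR s hs t ht⟩
    · refine ⟨Cφ2 * CZ ^ 2 + Cφ1 * CZR, fun s hs t ht => ?_⟩
      have hzt := hYZ t ht
      have hzs := hYZ s hs
      have hsplit : Y t - Y s - (ψ (Z s)) (X t - X s)
          = (φ (Z t) - φ (Z s) - fderiv ℝ φ (Z s) (Z t - Z s))
            + fderiv ℝ φ (Z s) (Z t - Z s - g (Z s) (X t - X s)) := by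
        rw [hzt, hzs, hψdef]
        simp only [ContinuousLinearMap.comp_apply, map_sub]
        abel
      rw [hsplit]
      have e1 : ‖φ (Z t) - φ (Z s) - fderiv ℝ φ (Z s) (Z t - Z s)‖
          ≤ Cφ2 * CZ ^ 2 * |t - s| ^ (2 * α) := by
        refine le_trans (hφtaylor (Z s) (Z t)) ?_
        have h5 : ‖Z t - Z s‖ ^ 2 ≤ (CZ * |t - s| ^ α) ^ 2 := by
          have := hCZ s hs t ht
          exact pow_le_pow_left₀ (norm_nonneg _) this 2
        calc Cφ2 * ‖Z t - Z s‖ ^ 2 ≤ Cφ2 * (CZ * |t - s| ^ α) ^ 2 :=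
              mul_le_mul_of_nonneg_left h5 hCφ2nn
          _ = Cφ2 * CZ ^ 2 * |t - s| ^ (2 * α) := by
              rw [mul_pow, mul_assoc, hpow]
      have e2 : ‖fderiv ℝ φ (Z s) (Z t - Z s - g (Z s) (X t - X s))‖
          ≤ Cφ1 * (CZR * |t - s| ^ (2 * α)) := by
        refine le_trans ((fderiv ℝ φ (Z s)).le_opNorm _) ?_
        exact mul_le_mul (hφd1 _) (hCZR s hs t ht) (norm_nonneg _) hCφ1nn
      calc ‖(φ (Z t) - φ (Z s) - fderiv ℝ φ (Z s) (Z t - Z s))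
            + fderiv ℝ φ (Z s) (Z t - Z s - g (Z s) (X t - X s))‖
          ≤ ‖φ (Z t) - φ (Z s) - fderiv ℝ φ (Z s) (Z t - Z s)‖
            + ‖fderiv ℝ φ (Z s) (Z t - Z s - g (Z s) (X t - X s))‖ := norm_add_le _ _
        _ ≤ Cφ2 * CZ ^ 2 * |t - s| ^ (2 * α) + Cφ1 * (CZR * |t - s| ^ (2 * α)) :=
            add_le_add e1 e2
        _ = (Cφ2 * CZ ^ 2 + Cφ1 * CZR) * |t - s| ^ (2 * α) := by ring
    · have hψcont : Continuous ψ :=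
        Continuous.clm_comp (hφ.continuous_fderiv (by norm_num)) hg.continuous
      exact ((hf.continuous.comp_continuousOn hYcont).sub
        (hψcont.comp_continuousOn hZcont))
  -- Step C: uniqueness of second-level derivative
  have hC2 : ∀ t ∈ Icc (0:ℝ) T,
      (fderiv ℝ f (Y t)).comp (f (Y t)) = (Dψ (Z t)).comp (g (Z t)) := by
    apply unique_gubinelli_deriv hT hX (A := fun t => f (Y t))
    · refine ⟨Cf2 * CY ^ 2 + Cf1 * CYR, fun s hs t ht => ?_⟩
      have hsplit : f (Y t) - f (Y s) - ((fderiv ℝ f (Y s)).comp (f (Y s))) (X t - X s)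
          = (f (Y t) - f (Y s) - fderiv ℝ f (Y s) (Y t - Y s))
            + fderiv ℝ f (Y s) (Y t - Y s - f (Y s) (X t - X s)) := by
        simp only [ContinuousLinearMap.comp_apply, map_sub]
        abel
      rw [hsplit]
      have e1 : ‖f (Y t) - f (Y s) - fderiv ℝ f (Y s) (Y t - Y s)‖
          ≤ Cf2 * CY ^ 2 * |t - s| ^ (2 * α) := by
        refine le_trans (hftaylor (Y s) (Y t)) ?_
        have h5 : ‖Y t - Y s‖ ^ 2 ≤ (CY * |t - s| ^ α) ^ 2 :=
          pow_le_pow_left₀ (norm_nonneg _) (hCY s hs t ht) 2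
        calc Cf2 * ‖Y t - Y s‖ ^ 2 ≤ Cf2 * (CY * |t - s| ^ α) ^ 2 :=
              mul_le_mul_of_nonneg_left h5 hCf2nn
          _ = Cf2 * CY ^ 2 * |t - s| ^ (2 * α) := by rw [mul_pow, mul_assoc, hpow]
      have e2 : ‖fderiv ℝ f (Y s) (Y t - Y s - f (Y s) (X t - X s))‖
          ≤ Cf1 * (CYR * |t - s| ^ (2 * α)) := by
        refine le_trans ((fderiv ℝ f (Y s)).le_opNorm _) ?_
        exact mul_le_mul (hfd1 _) (hCYR s hs t ht) (norm_nonneg _) hCf1nn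
      calc ‖(f (Y t) - f (Y s) - fderiv ℝ f (Y s) (Y t - Y s))
            + fderiv ℝ f (Y s) (Y t - Y s - f (Y s) (X t - X s))‖
          ≤ ‖f (Y t) - f (Y s) - fderiv ℝ f (Y s) (Y t - Y s)‖
            + ‖fderiv ℝ f (Y s) (Y t - Y s - f (Y s) (X t - X s))‖ := norm_add_le _ _
        _ ≤ Cf2 * CY ^ 2 * |t - s| ^ (2 * α) + Cf1 * (CYR * |t - s| ^ (2 * α)) :=
            add_le_add e1 e2
        _ = (Cf2 * CY ^ 2 + Cf1 * CYR) * |t - s| ^ (2 * α) := by ring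
    · refine ⟨(Cφ1 * Cg2 + Cφ2 * Cg1 + Cφ3 * Cg0 + Cφ2 * Cg1) * CZ ^ 2
        + (Cφ1 * Cg1 + Cφ2 * Cg0) * CZR, fun s hs t ht => ?_⟩
      have hbt := hB t ht
      have hbs := hB s hs
      have hsplit : f (Y t) - f (Y s) - ((Dψ (Z s)).comp (g (Z s))) (X t - X s)
          = (ψ (Z t) - ψ (Z s) - Dψ (Z s) (Z t - Z s))
            + Dψ (Z s) (Z t - Z s - g (Z s) (X t - X s)) := by
        rw [hbt, hbs]
        simp only [ContinuousLinearMap.comp_apply, map_sub]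
        abel
      rw [hsplit]
      have e1 : ‖ψ (Z t) - ψ (Z s) - Dψ (Z s) (Z t - Z s)‖
          ≤ (Cφ1 * Cg2 + Cφ2 * Cg1 + Cφ3 * Cg0 + Cφ2 * Cg1) * CZ ^ 2
            * |t - s| ^ (2 * α) := by
        refine le_trans (hψtaylor (Z s) (Z t)) ?_
        have h5 : ‖Z t - Z s‖ ^ 2 ≤ (CZ * |t - s| ^ α) ^ 2 :=
          pow_le_pow_left₀ (norm_nonneg _) (hCZ s hs t ht) 2
        calc (Cφ1 * Cg2 + Cφ2 * Cg1 + Cφ3 * Cg0 + Cφ2 * Cg1) * ‖Z t - Z s‖ ^ 2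
            ≤ (Cφ1 * Cg2 + Cφ2 * Cg1 + Cφ3 * Cg0 + Cφ2 * Cg1) * (CZ * |t - s| ^ α) ^ 2 :=
              mul_le_mul_of_nonneg_left h5 (by positivity)
          _ = (Cφ1 * Cg2 + Cφ2 * Cg1 + Cφ3 * Cg0 + Cφ2 * Cg1) * CZ ^ 2
              * |t - s| ^ (2 * α) := by rw [mul_pow, mul_assoc, hpow]
      have e2 : ‖Dψ (Z s) (Z t - Z s - g (Z s) (X t - X s))‖
          ≤ (Cφ1 * Cg1 + Cφ2 * Cg0) * (CZR * |t - s| ^ (2 * α)) := by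
        refine le_trans ((Dψ (Z s)).le_opNorm _) ?_
        exact mul_le_mul (hDψb _) (hCZR s hs t ht) (norm_nonneg _) (by positivity)
      calc ‖(ψ (Z t) - ψ (Z s) - Dψ (Z s) (Z t - Z s))
            + Dψ (Z s) (Z t - Z s - g (Z s) (X t - X s))‖
          ≤ ‖ψ (Z t) - ψ (Z s) - Dψ (Z s) (Z t - Z s)‖
            + ‖Dψ (Z s) (Z t - Z s - g (Z s) (X t - X s))‖ := norm_add_le _ _
        _ ≤ (Cφ1 * Cg2 + Cφ2 * Cg1 + Cφ3 * Cg0 + Cφ2 * Cg1) * CZ ^ 2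
              * |t - s| ^ (2 * α)
            + (Cφ1 * Cg1 + Cφ2 * Cg0) * (CZR * |t - s| ^ (2 * α)) := add_le_add e1 e2
        _ = ((Cφ1 * Cg2 + Cφ2 * Cg1 + Cφ3 * Cg0 + Cφ2 * Cg1) * CZ ^ 2
            + (Cφ1 * Cg1 + Cφ2 * Cg0) * CZR) * |t - s| ^ (2 * α) := by ring
    · have hc1 : Continuous (fun y : W => (fderiv ℝ f y).comp (f y)) :=
        Continuous.clm_comp (hf.continuous_fderiv two_ne_zero) hf.continuous
      have hψC2 : ContDiff ℝ 2 ψ := hφ'C2.clm_comp hg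
      have hDψcont : Continuous Dψ := by
        have h6 : Dψ = fderiv ℝ ψ := funext fun z => (hψfd z).symm
        rw [h6]
        exact hψC2.continuous_fderiv two_ne_zero
      have hc2 : Continuous (fun z : E => (Dψ z).comp (g z)) :=
        Continuous.clm_comp hDψcont hg.continuous
      exact (hc1.comp_continuousOn hYcont).sub (hc2.comp_continuousOn hZcont)
  -- conclusion
  intro t ht v w
  have h := hC2 t ht
  have h' := congrArg (fun (L : V →L[ℝ] V →L[ℝ] W) => L v w) h
  simp only [ContinuousLinearMap.comp_apply] at h'
  rw [hDψapp] at h'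
  simpa only [ContinuousLinearMap.add_apply, ContinuousLinearMap.comp_apply] using h'
end
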